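/- Let 𝔸 be an infinite first-order structure and Ā = ⟨A_n : n < ω⟩ an ω-representation of 𝔸. For f,g ∈ Aut(𝔸) define d(f,g) = sup{2^{-n} : there is a ∈ A_n such that for some (f',g') ∈ {(f,g),(f⁻¹,g⁻¹)} either (i) for some m < ω exactly one of f'(a) ∈ A_m, g'(a) ∈ A_m holds, or (ii) f'(a) ≠ g'(a) and both f'(a), g'(a) lie in A_n} (with sup ∅ = 0). Then d is a metric on Aut(𝔸), indeed an ultrametric (d(f,h) ≤ max(d(f,g), d(g,h))); the metric space (Aut(𝔸), d) is complete; and its density is at most 2^{ℵ₀} + Σ_{n<ω} 2^{|A_n|}. -/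

import Mathlib

open FirstOrder Cardinal

universe u v w

/-- The distance `d(f,g)` on `Aut(𝔸)` associated to an `ω`-representation
`A = ⟨A_n : n < ω⟩` of `𝔸`: the supremum (with `sup ∅ = 0`) of the values `2^{-n}` such
that there is `a ∈ A_n` such that for some `(f',g') ∈ {(f,g), (f⁻¹,g⁻¹)}` either
for some `m` exactly one of `f'(a) ∈ A_m`, `g'(a) ∈ A_m` holds, or
`f'(a) ≠ g'(a)` and both lie in `A_n`. -/
noncomputable def repDist {L : Language} {M : Type u} [L.Structure M]
    (A : ℕ → Set M) (f g : M ≃[L] M) : ℝ :=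
  sSup (insert 0 {r : ℝ | ∃ n : ℕ, r = (2 : ℝ)⁻¹ ^ n ∧
    ∃ a ∈ A n, ∃ p : (M ≃[L] M) × (M ≃[L] M), (p = (f, g) ∨ p = (f.symm, g.symm)) ∧
      ((∃ m : ℕ, Xor' (p.1 a ∈ A m) (p.2 a ∈ A m)) ∨
        (p.1 a ≠ p.2 a ∧ p.1 a ∈ A n ∧ p.2 a ∈ A n))})

section Aux

variable {L : Language} {M : Type u} [L.Structure M] (A : ℕ → Set M)

/-- The basic "disagreement" condition between two points at level `n`. -/
def RCond (n : ℕ) (x y : M) : Prop :=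
  (∃ m : ℕ, Xor' (x ∈ A m) (y ∈ A m)) ∨ (x ≠ y ∧ x ∈ A n ∧ y ∈ A n)

/-- The witness predicate: there is a witness at level `n` for `f, g`. -/
def RW (f g : M ≃[L] M) (n : ℕ) : Prop :=
  ∃ a ∈ A n, RCond A n (f a) (g a) ∨ RCond A n (f.symm a) (g.symm a)

theorem repDist_eq (f g : M ≃[L] M) :
    repDist A f g = sSup (insert 0 {r : ℝ | ∃ n : ℕ, r = (2 : ℝ)⁻¹ ^ n ∧ RW A f g n}) := by
  unfold repDist
  congr 1
  ext r
  simp only [Set.mem_insert_iff, Set.mem_setOf_eq]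
  refine or_congr Iff.rfl (exists_congr fun n => and_congr Iff.rfl (exists_congr fun a =>
    and_congr Iff.rfl ?_))
  constructor
  · rintro ⟨p, (rfl | rfl), hc⟩
    · exact Or.inl hc
    · exact Or.inr hc
  · rintro (hc | hc)
    · exact ⟨(f, g), Or.inl rfl, hc⟩
    · exact ⟨(f.symm, g.symm), Or.inr rfl, hc⟩

theorem RW_symm {f g : M ≃[L] M} {n : ℕ} (h : RW A f g n) : RW A g f n := by
  obtain ⟨a, ha, hc⟩ := h
  refine ⟨a, ha, ?_⟩
  refine hc.imp ?_ ?_ <;>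
  · rintro (⟨m, hm⟩ | ⟨h1, h2, h3⟩)
    · exact Or.inl ⟨m, hm.symm⟩
    · exact Or.inr ⟨Ne.symm h1, h3, h2⟩

theorem rcond_trans {n : ℕ} {x y z : M} (h : RCond A n x z) :
    RCond A n x y ∨ RCond A n y z := by
  rcases h with ⟨m, hm⟩ | ⟨hne, hx, hz⟩
  · by_cases hy : y ∈ A m
    · rcases hm with ⟨hx, hz⟩ | ⟨hz, hx⟩
      · exact Or.inr (Or.inl ⟨m, Or.inl ⟨hy, hz⟩⟩)
      · exact Or.inl (Or.inl ⟨m, Or.inr ⟨hy, hx⟩⟩)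
    · rcases hm with ⟨hx, hz⟩ | ⟨hz, hx⟩
      · exact Or.inl (Or.inl ⟨m, Or.inl ⟨hx, hy⟩⟩)
      · exact Or.inr (Or.inl ⟨m, Or.inr ⟨hz, hy⟩⟩)
  · by_cases hy : y ∈ A n
    · by_cases hxy : x = y
      · exact Or.inr (Or.inr ⟨hxy ▸ hne, hy, hz⟩)
      · exact Or.inl (Or.inr ⟨hxy, hx, hy⟩)
    · exact Or.inl (Or.inl ⟨n, Or.inl ⟨hx, hy⟩⟩)

theorem RW_trans {f g h : M ≃[L] M} {n : ℕ} (hw : RW A f h n) :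
    RW A f g n ∨ RW A g h n := by
  obtain ⟨a, ha, hc | hc⟩ := hw
  · rcases rcond_trans A (y := g a) hc with h' | h'
    · exact Or.inl ⟨a, ha, Or.inl h'⟩
    · exact Or.inr ⟨a, ha, Or.inl h'⟩
  · rcases rcond_trans A (y := g.symm a) hc with h' | h'
    · exact Or.inl ⟨a, ha, Or.inr h'⟩
    · exact Or.inr ⟨a, ha, Or.inr h'⟩

theorem repDist_bddAbove (f g : M ≃[L] M) :
    BddAbove (insert (0:ℝ) {r : ℝ | ∃ n : ℕ, r = (2 : ℝ)⁻¹ ^ n ∧ RW A f g n}) := by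
  refine ⟨1, ?_⟩
  rintro r (rfl | ⟨n, rfl, -⟩)
  · exact zero_le_one
  · exact pow_le_one₀ (by norm_num) (by norm_num)

theorem repDist_nonneg (f g : M ≃[L] M) : 0 ≤ repDist A f g := by
  rw [repDist_eq]
  exact le_csSup (repDist_bddAbove A f g) (Set.mem_insert _ _)

theorem le_repDist {f g : M ≃[L] M} {n : ℕ} (h : RW A f g n) :
    (2 : ℝ)⁻¹ ^ n ≤ repDist A f g := by
  rw [repDist_eq]
  exact le_csSup (repDist_bddAbove A f g) (Set.mem_insert_of_mem _ ⟨n, rfl, h⟩)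

theorem repDist_le {f g : M ≃[L] M} {c : ℝ} (hc : 0 ≤ c)
    (h : ∀ n, RW A f g n → (2 : ℝ)⁻¹ ^ n ≤ c) : repDist A f g ≤ c := by
  rw [repDist_eq]
  refine csSup_le ⟨0, Set.mem_insert _ _⟩ ?_
  rintro r (rfl | ⟨n, rfl, hn⟩)
  · exact hc
  · exact h n hn

theorem repDist_comm (f g : M ≃[L] M) : repDist A f g = repDist A g f := by
  refine le_antisymm ?_ ?_ <;>
    exact repDist_le A (repDist_nonneg A _ _) fun n hn => le_repDist A (RW_symm A hn)

theorem repDist_self (f : M ≃[L] M) : repDist A f f = 0 := by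
  refine le_antisymm ?_ (repDist_nonneg A f f)
  refine repDist_le A le_rfl fun n hn => absurd hn ?_
  rintro ⟨a, ha, hc | hc⟩ <;>
  · rcases hc with ⟨m, hm⟩ | ⟨hne, -⟩
    · rcases hm with ⟨h1, h2⟩ | ⟨h1, h2⟩ <;> exact h2 h1
    · exact hne rfl

theorem repDist_ultra (f g h : M ≃[L] M) :
    repDist A f h ≤ max (repDist A f g) (repDist A g h) := by
  refine repDist_le A (le_max_of_le_left (repDist_nonneg A f g)) fun n hn => ?_
  rcases RW_trans A (g := g) hn with h' | h'
  · exact le_max_of_le_left (le_repDist A h')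
  · exact le_max_of_le_right (le_repDist A h')

theorem repDist_le_of_forall {f g : M ≃[L] M} {n : ℕ} (h : ∀ m ≤ n, ¬ RW A f g m) :
    repDist A f g ≤ (2 : ℝ)⁻¹ ^ (n + 1) := by
  refine repDist_le A (by positivity) fun m hm => ?_
  have : n + 1 ≤ m := by
    by_contra hc
    exact h m (by omega) hm
  exact pow_le_pow_of_le_one (by norm_num) (by norm_num) this

theorem not_RW_of_lt {f g : M ≃[L] M} {n : ℕ} (h : repDist A f g < (2 : ℝ)⁻¹ ^ n) :
    ∀ m ≤ n, ¬ RW A f g m := by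
  intro m hm hw
  have h1 : (2 : ℝ)⁻¹ ^ n ≤ (2 : ℝ)⁻¹ ^ m :=
    pow_le_pow_of_le_one (by norm_num) (by norm_num) hm
  exact absurd (le_repDist A hw) (not_le.2 (lt_of_lt_of_le h h1))

end Aux

section Aux2

variable {L : Language} {M : Type u} [L.Structure M] {A : ℕ → Set M}

theorem memA_mono (hmono : ∀ n, A n ⊆ A (n + 1)) {x : M} {m k : ℕ} (hx : x ∈ A m)
    (hmk : m ≤ k) : x ∈ A k := by
  induction k, hmk using Nat.le_induction with
  | base => exact hx
  | succ k hk ih => exact hmono k ih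

theorem not_rcond_intro {n : ℕ} {x y : M} (hiff : ∀ m, (x ∈ A m ↔ y ∈ A m))
    (heq : x ∈ A n → x = y) : ¬ RCond A n x y := by
  rintro (⟨m, ⟨hx, hy⟩ | ⟨hy, hx⟩⟩ | ⟨hne, hx, hy⟩)
  · exact hy ((hiff m).1 hx)
  · exact hx ((hiff m).2 hy)
  · exact hne (heq hx)

theorem not_rcond_elim {n : ℕ} {x y : M} (h : ¬ RCond A n x y) :
    (∀ m, (x ∈ A m ↔ y ∈ A m)) ∧ (x ∈ A n → x = y) := by
  have hiff : ∀ m, (x ∈ A m ↔ y ∈ A m) := by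
    intro m
    constructor
    · intro hx; by_contra hy; exact h (Or.inl ⟨m, Or.inl ⟨hx, hy⟩⟩)
    · intro hy; by_contra hx; exact h (Or.inl ⟨m, Or.inr ⟨hy, hx⟩⟩)
  refine ⟨hiff, fun hx => ?_⟩
  by_contra hne
  exact h (Or.inr ⟨hne, hx, (hiff n).1 hx⟩)

theorem not_RW_elim {f g : M ≃[L] M} {n : ℕ} (h : ¬ RW A f g n) {a : M} (ha : a ∈ A n) :
    ¬ RCond A n (f a) (g a) ∧ ¬ RCond A n (f.symm a) (g.symm a) :=
  ⟨fun hc => h ⟨a, ha, Or.inl hc⟩, fun hc => h ⟨a, ha, Or.inr hc⟩⟩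

theorem repDist_eq_zero_imp (hmono : ∀ n, A n ⊆ A (n + 1)) (hex : ∀ x : M, ∃ n, x ∈ A n)
    {f g : M ≃[L] M} (h : repDist A f g = 0) : f = g := by
  by_contra hne
  have hane : ∃ a, f a ≠ g a := by
    by_contra hc
    push_neg at hc
    exact hne (FirstOrder.Language.Equiv.ext hc)
  obtain ⟨a, ha⟩ := hane
  obtain ⟨n₁, h1⟩ := hex a
  obtain ⟨n₂, h2⟩ := hex (f a)
  obtain ⟨n₃, h3⟩ := hex (g a)
  set n := max n₁ (max n₂ n₃) with hn
  have hw : RW A f g n := by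
    refine ⟨a, memA_mono hmono h1 (le_max_left _ _), Or.inl (Or.inr ⟨ha, ?_, ?_⟩)⟩
    · exact memA_mono hmono h2 (le_trans (le_max_left _ _) (le_max_right _ _))
    · exact memA_mono hmono h3 (le_trans (le_max_right _ _) (le_max_right _ _))
  have := le_repDist A hw
  rw [h] at this
  exact absurd this (not_le.2 (by positivity))

/-- The metric space structure on `Aut(𝔸)` given by `repDist`. -/
noncomputable def repMetric (A : ℕ → Set M) (hmono : ∀ n, A n ⊆ A (n + 1))
    (hex : ∀ x : M, ∃ n, x ∈ A n) : MetricSpace (M ≃[L] M) where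
  dist := repDist A
  dist_self := repDist_self A
  dist_comm := repDist_comm A
  dist_triangle f g h := le_trans (repDist_ultra A f g h)
    (max_le_add_of_nonneg (repDist_nonneg A f g) (repDist_nonneg A g h))
  eq_of_dist_eq_zero := repDist_eq_zero_imp hmono hex
  edist_dist x y := rfl

end Aux2

section Aux3

variable {L : Language} {M : Type u} [L.Structure M] {A : ℕ → Set M}

theorem stab_point {u : ℕ → M ≃[L] M} (hmono : ∀ n, A n ⊆ A (n + 1))
    (hex : ∀ x : M, ∃ n, x ∈ A n)
    (hc : ∀ n : ℕ, ∃ N, ∀ k ≥ N, ∀ l ≥ N, ∀ m ≤ n, ¬ RW A (u k) (u l) m) (a : M) :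
    ∃ N, ∀ k ≥ N, u k a = u N a ∧ (u k).symm a = (u N).symm a := by
  obtain ⟨n₀, ha⟩ := hex a
  obtain ⟨N₀, hN₀⟩ := hc n₀
  obtain ⟨m₁, hm₁⟩ := hex (u N₀ a)
  obtain ⟨m₂, hm₂⟩ := hex ((u N₀).symm a)
  set n₁ := max n₀ (max m₁ m₂) with hn₁
  obtain ⟨N₁', hN₁⟩ := hc n₁
  refine ⟨max N₀ N₁', fun k hk => ?_⟩
  set N := max N₀ N₁' with hN
  have hkN₀ : N₀ ≤ k := le_trans (le_max_left _ _) hk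
  have hk1 : N₁' ≤ k := le_trans (le_max_right _ _) hk
  have hmemk : u k a ∈ A m₁ :=
    ((not_rcond_elim (not_RW_elim (hN₀ k hkN₀ N₀ le_rfl n₀ le_rfl) ha).1).1 m₁).2 hm₁
  have hmemk2 : (u k).symm a ∈ A m₂ :=
    ((not_rcond_elim (not_RW_elim (hN₀ k hkN₀ N₀ le_rfl n₀ le_rfl) ha).2).1 m₂).2 hm₂
  have han₁ : a ∈ A n₁ := memA_mono hmono ha (le_max_left _ _)
  have h1 := not_RW_elim (hN₁ k hk1 N (le_max_right _ _) n₁ le_rfl) han₁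
  constructor
  · exact (not_rcond_elim h1.1).2
      (memA_mono hmono hmemk (le_trans (le_max_left _ _) (le_max_right _ _)))
  · exact (not_rcond_elim h1.2).2
      (memA_mono hmono hmemk2 (le_trans (le_max_right _ _) (le_max_right _ _)))

end Aux3

theorem card_bound (κ : Cardinal.{u}) :
    (ℵ₀ * ((κ + 1) * (ℵ₀ * (κ + 1)))) ^ κ ≤ 2 ^ (ℵ₀ : Cardinal.{u}) + 2 ^ κ := by
  have hμ : (ℵ₀ : Cardinal.{u}) ≤ ℵ₀ + κ := le_self_add
  have hκμ : κ ≤ ℵ₀ + κ := le_add_self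
  have h1μ : (1 : Cardinal.{u}) ≤ ℵ₀ + κ := le_trans Cardinal.one_le_aleph0 hμ
  have hbase : ℵ₀ * ((κ + 1) * (ℵ₀ * (κ + 1))) ≤ ℵ₀ + κ := by
    have hk1 : κ + 1 ≤ ℵ₀ + κ := by
      calc κ + 1 ≤ κ + ℵ₀ := by gcongr; exact Cardinal.one_le_aleph0
        _ = ℵ₀ + κ := add_comm _ _
    calc ℵ₀ * ((κ + 1) * (ℵ₀ * (κ + 1)))
        ≤ (ℵ₀ + κ) * ((ℵ₀ + κ) * ((ℵ₀ + κ) * (ℵ₀ + κ))) := by gcongr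
      _ = (ℵ₀ + κ) := by
          rw [Cardinal.mul_eq_self hμ, Cardinal.mul_eq_self hμ, Cardinal.mul_eq_self hμ]
  rcases le_or_gt ℵ₀ κ with h | h
  · have heq : ℵ₀ + κ = κ := Cardinal.add_eq_right h h
    calc (ℵ₀ * ((κ + 1) * (ℵ₀ * (κ + 1)))) ^ κ
        ≤ (ℵ₀ + κ) ^ κ := Cardinal.power_le_power_right hbase
      _ = κ ^ κ := by rw [heq]
      _ = 2 ^ κ := Cardinal.power_self_eq h
      _ ≤ 2 ^ (ℵ₀ : Cardinal.{u}) + 2 ^ κ := le_add_self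
  · have hbase2 : ℵ₀ + κ ≤ ℵ₀ := by
      calc ℵ₀ + κ ≤ ℵ₀ + ℵ₀ := add_le_add_right h.le _
        _ = ℵ₀ := Cardinal.aleph0_add_aleph0
    calc (ℵ₀ * ((κ + 1) * (ℵ₀ * (κ + 1)))) ^ κ
        ≤ (ℵ₀ : Cardinal.{u}) ^ κ := Cardinal.power_le_power_right (hbase.trans hbase2)
      _ ≤ (ℵ₀ : Cardinal.{u}) ^ (ℵ₀ : Cardinal.{u}) :=
          Cardinal.power_le_power_left Cardinal.aleph0_ne_zero h.le
      _ = 2 ^ (ℵ₀ : Cardinal.{u}) := Cardinal.power_self_eq le_rfl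
      _ ≤ 2 ^ (ℵ₀ : Cardinal.{u}) + 2 ^ κ := le_self_add



/-- For an infinite structure `𝔸` with an `ω`-representation `⟨A_n : n < ω⟩`, the function
`repDist` is a metric on `Aut(𝔸)`, indeed an ultrametric; the resulting metric space is
complete; and its density is at most `2^{ℵ₀} + Σ_{n<ω} 2^{|A_n|}`. -/
theorem aut_repDist_complete_ultrametric
    (L : Language) (M : Type u) [L.Structure M] [Infinite M]
    (A : ℕ → Set M) (hmono : ∀ n, A n ⊆ A (n + 1)) (hunion : (⋃ n, A n) = Set.univ) :
    ∃ m : MetricSpace (M ≃[L] M),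
      letI := m
      (∀ f g : M ≃[L] M, dist f g = repDist A f g) ∧
      (∀ f g h : M ≃[L] M, dist f h ≤ max (dist f g) (dist g h)) ∧
      CompleteSpace (M ≃[L] M) ∧
      (∃ s : Set (M ≃[L] M), Dense s ∧
        Cardinal.mk s ≤ 2 ^ (ℵ₀ : Cardinal.{u}) + Cardinal.sum (fun n => 2 ^ Cardinal.mk (A n))) := by
  have hex : ∀ x : M, ∃ n, x ∈ A n := by
    intro x
    have : x ∈ ⋃ n, A n := by rw [hunion]; trivial
    exact Set.mem_iUnion.1 this
  letI m := repMetric (L := L) A hmono hex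
  refine ⟨m, fun f g => rfl, fun f g h => repDist_ultra A f g h, ?_, ?_⟩
  · -- Completeness
    refine Metric.complete_of_cauchySeq_tendsto fun u hu => ?_
    have hc : ∀ n : ℕ, ∃ N, ∀ k ≥ N, ∀ l ≥ N, ∀ m ≤ n, ¬ RW A (u k) (u l) m := by
      intro n
      obtain ⟨N, hN⟩ := (Metric.cauchySeq_iff.1 hu) ((2 : ℝ)⁻¹ ^ n) (by positivity)
      exact ⟨N, fun k hk l hl => not_RW_of_lt A (hN k hk l hl)⟩
    choose N hN using stab_point hmono hex hc
    set F : M → M := fun a => u (N a) a with hF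
    set G : M → M := fun a => (u (N a)).symm a with hG
    have hFev : ∀ a : M, ∀ᶠ k in Filter.atTop, u k a = F a ∧ (u k).symm a = G a :=
      fun a => Filter.eventually_atTop.2 ⟨N a, hN a⟩
    have hGF : ∀ a, G (F a) = a := by
      intro a
      obtain ⟨k, hk1, hk2⟩ := ((hFev a).and (hFev (F a))).exists
      rw [← hk2.2, ← hk1.1, (u k).symm_apply_apply]
    have hFG : ∀ a, F (G a) = a := by
      intro a
      obtain ⟨k, hk1, hk2⟩ := ((hFev a).and (hFev (G a))).exists
      rw [← hk2.1, ← hk1.2, (u k).apply_symm_apply]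
    have hmapfun : ∀ {n : ℕ} (φ : L.Functions n) (x : Fin n → M),
        F (Language.Structure.funMap φ x) = Language.Structure.funMap φ (F ∘ x) := by
      intro n φ x
      have hev : ∀ᶠ k in Filter.atTop,
          (∀ i, u k (x i) = F (x i)) ∧ u k (Language.Structure.funMap φ x) = F (Language.Structure.funMap φ x) :=
        (Filter.eventually_all.2 fun i => (hFev (x i)).mono fun k hk => hk.1).and
          ((hFev (Language.Structure.funMap φ x)).mono fun k hk => hk.1)
      obtain ⟨k, h1, h2⟩ := hev.exists
      rw [← h2, (u k).map_fun]
      congr 1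
      ext i
      exact h1 i
    have hmaprel : ∀ {n : ℕ} (r : L.Relations n) (x : Fin n → M),
        Language.Structure.RelMap r (F ∘ x) ↔ Language.Structure.RelMap r x := by
      intro n r x
      obtain ⟨k, h1⟩ := (Filter.eventually_all.2 fun i => (hFev (x i)).mono
        fun k hk => hk.1).exists
      have hFx : F ∘ x = ⇑(u k) ∘ x := by
        ext i
        exact (h1 i).symm
      rw [hFx, (u k).map_rel]
    refine ⟨⟨⟨F, G, hGF, hFG⟩, @hmapfun, @hmaprel⟩, ?_⟩
    set E : M ≃[L] M := ⟨⟨F, G, hGF, hFG⟩, @hmapfun, @hmaprel⟩ with hE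
    have hEa : ∀ a, E a = F a := fun a => rfl
    have hEsa : ∀ a, E.symm a = G a := fun a => rfl
    rw [Metric.tendsto_atTop]
    intro ε hε
    obtain ⟨n, hn⟩ := exists_pow_lt_of_lt_one hε (by norm_num : (2 : ℝ)⁻¹ < 1)
    obtain ⟨Nc, hNc⟩ := hc n
    refine ⟨Nc, fun k hk => ?_⟩
    have hkey : ∀ m ≤ n, ¬ RW A (u k) E m := by
      intro m hm hw
      obtain ⟨a, ha, hcnd⟩ := hw
      obtain ⟨l, hl1, hl2, hl3⟩ : ∃ l, Nc ≤ l ∧ u l a = F a ∧ (u l).symm a = G a := by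
        obtain ⟨l, h1, h2⟩ := ((Filter.eventually_ge_atTop Nc).and (hFev a)).exists
        exact ⟨l, h1, h2.1, h2.2⟩
      have h2 : E a = u l a := (hEa a).trans hl2.symm
      have h3 : E.symm a = (u l).symm a := (hEsa a).trans hl3.symm
      rw [h2, h3] at hcnd
      exact hNc k hk l hl1 m hm ⟨a, ha, hcnd⟩
    calc dist (u k) E = repDist A (u k) E := rfl
      _ ≤ (2 : ℝ)⁻¹ ^ (n + 1) := repDist_le_of_forall A hkey
      _ < (2 : ℝ)⁻¹ ^ n := by
          rw [pow_succ]
          nlinarith [pow_pos (by norm_num : (0:ℝ) < 2⁻¹) n]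
      _ < ε := hn
  · -- Density
    classical
    set lvl : M → ℕ := fun x => Nat.find (hex x) with hlvl
    have hlvl_mem : ∀ x, x ∈ A (lvl x) := fun x => Nat.find_spec (hex x)
    have hlvl_iff : ∀ (x : M) (m : ℕ), x ∈ A m ↔ lvl x ≤ m := by
      intro x m
      exact ⟨fun h => Nat.find_le h, fun h => memA_mono hmono (hlvl_mem x) h⟩
    set C : ℕ → Type u := fun n => ↥(A n) → ℕ × (Option ↥(A n) × (ℕ × Option ↥(A n))) with hC
    set Φ : ∀ n : ℕ, (M ≃[L] M) → C n := fun n f a =>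
      (lvl (f a), (if h : (f a : M) ∈ A n then some ⟨f a, h⟩ else none,
       (lvl (f.symm a), if h : (f.symm a : M) ∈ A n then some ⟨f.symm a, h⟩ else none))) with hΦ
    have hΦ_close : ∀ (n : ℕ) (f g : M ≃[L] M), Φ n f = Φ n g →
        repDist A f g ≤ (2 : ℝ)⁻¹ ^ (n + 1) := by
      intro n f g hfg
      refine repDist_le_of_forall A ?_
      intro m hm hw
      obtain ⟨a, ham, hcnd⟩ := hw
      have han : a ∈ A n := memA_mono hmono ham hm
      have heq := congrFun hfg ⟨a, han⟩
      simp only [hΦ, Prod.mk.injEq] at heq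
      obtain ⟨e1, e2, e3, e4⟩ := heq
      have hiff1 : ∀ m', ((f a : M) ∈ A m' ↔ (g a : M) ∈ A m') := by
        intro m'
        rw [hlvl_iff, hlvl_iff, e1]
      have hiff2 : ∀ m', ((f.symm a : M) ∈ A m' ↔ (g.symm a : M) ∈ A m') := by
        intro m'
        rw [hlvl_iff, hlvl_iff, e3]
      have heq1 : (f a : M) ∈ A m → f a = g a := by
        intro hfa
        have hfan : (f a : M) ∈ A n := memA_mono hmono hfa hm
        have hgan : (g a : M) ∈ A n := (hiff1 n).1 hfan
        rw [dif_pos hfan, dif_pos hgan] at e2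
        exact congrArg Subtype.val (Option.some_injective _ e2)
      have heq2 : (f.symm a : M) ∈ A m → f.symm a = g.symm a := by
        intro hfa
        have hfan : (f.symm a : M) ∈ A n := memA_mono hmono hfa hm
        have hgan : (g.symm a : M) ∈ A n := (hiff2 n).1 hfan
        rw [dif_pos hfan, dif_pos hgan] at e4
        exact congrArg Subtype.val (Option.some_injective _ e4)
      rcases hcnd with hcnd | hcnd
      · exact not_rcond_intro hiff1 heq1 hcnd
      · exact not_rcond_intro hiff2 heq2 hcnd
    set T : ℕ → Type u := fun n => ↥(Set.range (Φ n)) with hT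
    set sec : (Σ n : ℕ, T n) → (M ≃[L] M) := fun p => Classical.choose p.2.2 with hsec
    have hsec_spec : ∀ p : Σ n : ℕ, T n, Φ p.1 (sec p) = (p.2 : C p.1) :=
      fun p => Classical.choose_spec p.2.2
    refine ⟨Set.range sec, ?_, ?_⟩
    · rw [Metric.dense_iff]
      intro f r hr
      obtain ⟨n, hn⟩ := exists_pow_lt_of_lt_one hr (by norm_num : (2 : ℝ)⁻¹ < 1)
      set p : Σ n : ℕ, T n := ⟨n, ⟨Φ n f, Set.mem_range_self f⟩⟩ with hp
      refine ⟨sec p, ?_, Set.mem_range_self p⟩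
      have : repDist A (sec p) f ≤ (2 : ℝ)⁻¹ ^ (n + 1) :=
        hΦ_close n (sec p) f (by rw [hsec_spec p])
      rw [Metric.mem_ball]
      calc dist (sec p) f = repDist A (sec p) f := rfl
        _ ≤ (2 : ℝ)⁻¹ ^ (n + 1) := this
        _ < (2 : ℝ)⁻¹ ^ n := by
            rw [pow_succ]
            nlinarith [pow_pos (by norm_num : (0:ℝ) < 2⁻¹) n]
        _ < r := hn
    · calc Cardinal.mk (Set.range sec) ≤ Cardinal.mk (Σ n : ℕ, T n) := Cardinal.mk_range_le
        _ = Cardinal.sum (fun n => Cardinal.mk (T n)) := Cardinal.mk_sigma T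
        _ ≤ Cardinal.sum (fun n => (2 : Cardinal.{u}) ^ (ℵ₀ : Cardinal.{u}) +
            (2 : Cardinal.{u}) ^ Cardinal.mk (A n)) := by
            refine Cardinal.sum_le_sum _ _ fun n => ?_
            calc Cardinal.mk (T n) ≤ Cardinal.mk (C n) := Cardinal.mk_set_le _
              _ = Cardinal.mk (ℕ × (Option ↥(A n) × (ℕ × Option ↥(A n)))) ^ Cardinal.mk (A n) :=
                  (Cardinal.power_def _ _).symm
              _ = (ℵ₀ * ((Cardinal.mk (A n) + 1) * (ℵ₀ * (Cardinal.mk (A n) + 1)))) ^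
                  Cardinal.mk (A n) := by
                  congr 1
                  simp [Cardinal.mk_prod, Cardinal.mk_option]
              _ ≤ 2 ^ (ℵ₀ : Cardinal.{u}) + 2 ^ Cardinal.mk (A n) := card_bound _
        _ = 2 ^ (ℵ₀ : Cardinal.{u}) + Cardinal.sum (fun n => 2 ^ Cardinal.mk (A n)) := by
            have hsplit : (fun n : ℕ => (2 : Cardinal.{u}) ^ (ℵ₀ : Cardinal.{u}) +
                (2 : Cardinal.{u}) ^ Cardinal.mk (A n)) =
                (fun _ : ℕ => (2 : Cardinal.{u}) ^ (ℵ₀ : Cardinal.{u})) +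
                (fun n => (2 : Cardinal.{u}) ^ Cardinal.mk (A n)) := rfl
            rw [hsplit, Cardinal.sum_add_distrib]
            congr 1
            rw [Cardinal.sum_const]
            simp only [Cardinal.mk_nat, Cardinal.lift_aleph0, Cardinal.lift_two_power,
              Cardinal.lift_aleph0]
            exact Cardinal.mul_eq_right ((Cardinal.cantor ℵ₀).le) ((Cardinal.cantor ℵ₀).le) Cardinal.aleph0_ne_zero
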